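/- Let s₁, …, s_n be real numbers (the margins Y_i·F(X_i)), set ℓ_i = -exp(s_i), and take δ = log((1/n) ∑_{i=1}^n e^{-s_i}) - (1/n) ∑_{i=1}^n s_i. Then δ ≥ 0, and (assuming the s_i are not all equal so δ > 0) β* = 0 satisfies Ψ(0) = 0 with Ψ as defined before; consequently the worst-case weights are ω*_i = e^{-s_i} / ∑_{k=1}^n e^{-s_k}, which are exactly the AdaBoost reweighting weights. -/

import Mathlib

open Finset Real

/-- Connection to AdaBoost: with margins `s i`, losses `ℓ i = -exp (s i)` and
`δ = log((1/n) ∑ exp(-s i)) - (1/n) ∑ (-(s i))`, we have `δ ≥ 0` (Jensen), and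
if the `s i` are not all equal then `δ > 0`; moreover `β* = 0` is a root of
`Ψ`, and the resulting worst-case weights are the AdaBoost weights
`exp(-s i) / ∑ exp(-s k)`. -/
theorem stmt_7 (n : ℕ) (hn : 0 < n) (s : Fin n → ℝ)
    (ℓ : Fin n → ℝ) (hℓ : ∀ i, ℓ i = -Real.exp (s i))
    (δ : ℝ)
    (hδ : δ = Real.log ((1 / (n : ℝ)) * ∑ i, Real.exp (-(s i))) -
        (1 / (n : ℝ)) * ∑ i, -(s i)) :
    0 ≤ δ ∧
    ((¬ ∀ i j, s i = s j) → 0 < δ) ∧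
    (1 / (n : ℝ)) * ∑ i, Real.log (-1 / (ℓ i + 0)) -
        Real.log ((1 / (n : ℝ)) * ∑ i, -1 / (ℓ i + 0)) + δ = 0 ∧
    (∀ i, (ℓ i + 0)⁻¹ / ∑ k, (ℓ k + 0)⁻¹ =
        Real.exp (-(s i)) / ∑ k, Real.exp (-(s k))) := by
  have hn' : (0 : ℝ) < (n : ℝ) := by exact_mod_cast hn
  have hw : ∑ _i : Fin n, (1 / (n : ℝ)) = 1 := by
    simp [Finset.sum_const, Finset.card_univ]
    field_simp
  have hM : 0 < (1 / (n : ℝ)) * ∑ i, Real.exp (-(s i)) := by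
    apply mul_pos (by positivity)
    apply Finset.sum_pos (fun i _ => Real.exp_pos _)
    exact Finset.univ_nonempty_iff.2 ⟨⟨0, hn⟩⟩
  -- weak Jensen
  have hjensenw : Real.exp ((1 / (n : ℝ)) * ∑ i, -(s i)) ≤
      (1 / (n : ℝ)) * ∑ i, Real.exp (-(s i)) := by
    have := convexOn_exp.map_sum_le (t := Finset.univ) (w := fun _ : Fin n => 1 / (n : ℝ))
      (p := fun i => -(s i)) (fun i _ => by positivity) hw (fun i _ => trivial)
    simpa [Finset.mul_sum, smul_eq_mul] using this
  have h0 : 0 ≤ δ := by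
    rw [hδ, sub_nonneg, Real.le_log_iff_exp_le hM]
    exact hjensenw
  refine ⟨h0, ?_, ?_, ?_⟩
  · intro hne
    push_neg at hne
    obtain ⟨j, k, hjk⟩ := hne
    have hjensens : Real.exp ((1 / (n : ℝ)) * ∑ i, -(s i)) <
        (1 / (n : ℝ)) * ∑ i, Real.exp (-(s i)) := by
      have := strictConvexOn_exp.map_sum_lt (t := Finset.univ)
        (w := fun _ : Fin n => 1 / (n : ℝ)) (p := fun i => -(s i))
        (fun i _ => by positivity) hw (fun i _ => trivial)
        ⟨j, Finset.mem_univ j, k, Finset.mem_univ k, by simpa using hjk⟩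
      simpa [Finset.mul_sum, smul_eq_mul] using this
    rw [hδ, sub_pos, Real.lt_log_iff_exp_lt hM]
    exact hjensens
  · have h1 : ∀ i, -1 / (ℓ i + 0) = Real.exp (-(s i)) := by
      intro i
      rw [hℓ i]
      rw [Real.exp_neg]
      have := Real.exp_pos (s i)
      field_simp
      ring
    have h2 : ∀ i, Real.log (-1 / (ℓ i + 0)) = -(s i) := by
      intro i; rw [h1 i, Real.log_exp]
    simp only [h1, h2, Real.log_exp]
    rw [hδ]; ring
  · intro i
    have hden : 0 < ∑ k, Real.exp (-(s k)) := by
      apply Finset.sum_pos (fun i _ => Real.exp_pos _)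
      exact Finset.univ_nonempty_iff.2 ⟨⟨0, hn⟩⟩
    have h1 : ∀ i, (ℓ i + 0)⁻¹ = -Real.exp (-(s i)) := by
      intro i
      rw [hℓ i, add_zero, Real.exp_neg]
      have := Real.exp_pos (s i)
      field_simp
    simp only [h1]
    rw [Finset.sum_neg_distrib, neg_div_neg_eq]
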